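/- arXiv:1303.2489 — 9 statements merged into one kernel-verified Lean document; each statement's English description precedes it below -/
import Mathlib

section
/- Soundness of well-formedness: if a stack s and heap h satisfy a spatial conjunction Σ, then s satisfies WellFormed(Σ), i.e., no two distinct conjuncts of Σ collide under s. -/
def Heap := ℤ → Option ℤ
def Stack := String → ℤ

def hemp : Heap := fun _ => none
def hsingle (a v : ℤ) : Heap := fun l => if l = a then some v else none
def hdisj (h₁ h₂ : Heap) : Prop := ∀ l, h₁ l = none ∨ h₂ l = none
def hunion (h₁ h₂ : Heap) : Heap := fun l =>
  match h₁ l with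
  | some v => some v
  | none => h₂ l
def hdom (h : Heap) : Set ℤ := {l | h l ≠ none}

/-- Acyclic list segment: `Lseg a b h` means `h` is a list segment from `a` to `b`. -/
inductive Lseg : ℤ → ℤ → Heap → Prop
  | nil (a : ℤ) : Lseg a a hemp
  | cons {a b c : ℤ} {h : Heap} (hne : a ≠ b) (hfresh : h a = none)
      (ht : Lseg c b h) : Lseg a b (hunion (hsingle a c) h)

/-- Spatial predicates. -/
inductive SP where
  | emp : SP
  | next (x y : String) : SP
  | lseg (x y : String) : SP

/-- Satisfaction of a single spatial predicate. -/
def sat (s : Stack) (h : Heap) : SP → Prop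
  | .emp => h = hemp
  | .next x y => h = hsingle (s x) (s y)
  | .lseg x y => Lseg (s x) (s y) h

/-- Satisfaction of a spatial conjunction (list of predicates). -/
def satList (s : Stack) (h : Heap) : List SP → Prop
  | [] => h = hemp
  | S :: Sg => ∃ h₁ h₂, hdisj h₁ h₂ ∧ h = hunion h₁ h₂ ∧ sat s h₁ S ∧ satList s h₂ Sg

/-- Emptiness condition of a spatial predicate. -/
def emptyCond (s : Stack) : SP → Prop
  | .emp => True
  | .next _ _ => False
  | .lseg x y => s x = s y

/-- Address of a spatial predicate (dummy value 0 for `emp`, which is always empty). -/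
def addrVal (s : Stack) : SP → ℤ
  | .emp => 0
  | .next x _ => s x
  | .lseg x _ => s x

def collide (s : Stack) (S S' : SP) : Prop :=
  ¬ emptyCond s S ∧ ¬ emptyCond s S' ∧ addrVal s S = addrVal s S'

def wellFormed (s : Stack) (Sg : List SP) : Prop :=
  List.Pairwise (fun S S' => ¬ collide s S S') Sg

lemma lseg_addr {a b : ℤ} {h : Heap} (hl : Lseg a b h) (hne : a ≠ b) :
    h a ≠ none := by
  cases hl with
  | nil => exact absurd rfl hne
  | cons hne' hfresh ht =>
    simp [hunion, hsingle]

lemma sat_addr {s : Stack} {h : Heap} {S : SP} (hs : sat s h S)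
    (hne : ¬ emptyCond s S) : h (addrVal s S) ≠ none := by
  cases S with
  | emp => exact absurd trivial hne
  | next x y => subst hs; simp [hsingle, addrVal]
  | lseg x y => exact lseg_addr hs hne

lemma satList_addr {s : Stack} {h : Heap} {Sg : List SP} (hs : satList s h Sg)
    {S : SP} (hmem : S ∈ Sg) (hne : ¬ emptyCond s S) :
    h (addrVal s S) ≠ none := by
  induction Sg generalizing h with
  | nil => cases hmem
  | cons T Tg ih =>
    obtain ⟨h₁, h₂, hd, rfl, hsat, hrest⟩ := hs
    cases hmem with
    | head =>
      have := sat_addr hsat hne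
      simp only [hunion]
      cases hh : h₁ (addrVal s S) with
      | none => exact absurd hh this
      | some v => simp
    | tail _ hmem' =>
      have := ih hrest hmem'
      simp only [hunion]
      cases hh : h₁ (addrVal s S) with
      | none => exact this
      | some v => simp

theorem stmt2 (s : Stack) (h : Heap) (Sg : List SP) (hs : satList s h Sg) :
    wellFormed s Sg := by
  induction Sg generalizing h with
  | nil => exact List.Pairwise.nil
  | cons T Tg ih =>
    obtain ⟨h₁, h₂, hd, rfl, hsat, hrest⟩ := hs
    refine List.Pairwise.cons ?_ (ih h₂ hrest)
    intro S' hmem ⟨hne1, hne2, haddr⟩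
    have h1 := sat_addr hsat hne1
    have h2 := satList_addr hrest hmem hne2
    rw [haddr] at h1
    rcases hd (addrVal s S') with hc | hc
    · exact h1 hc
    · exact h2 hc
end

section
/- Completeness of well-formedness: if a stack s satisfies WellFormed(Σ) for a spatial conjunction Σ = S₁ ∗ ... ∗ Sₙ, then there exists a heap h with s,h ⊨ Σ, and moreover the domain of h equals { s(Addr(Sᵢ)) : s ⊨ ¬Empty(Sᵢ) }. -/
def heapOf (s : Stack) : SP → Heap
  | .emp => hemp
  | .next x y => hsingle (s x) (s y)
  | .lseg x y => if s x = s y then hemp else hsingle (s x) (s y)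

lemma hunion_hemp (h : Heap) : hunion h hemp = h := by
  funext l; unfold hunion hemp; cases h l <;> rfl

lemma sat_heapOf (s : Stack) (S : SP) : sat s (heapOf s S) S := by
  cases S with
  | emp => rfl
  | next x y => rfl
  | lseg x y =>
    by_cases hxy : s x = s y
    · simp [heapOf, hxy, sat]; exact hxy ▸ Lseg.nil (s x)
    · simp only [heapOf, hxy, if_false, sat]
      have := Lseg.cons (c := s y) hxy (rfl : hemp (s x) = none) (Lseg.nil (s y))
      rwa [hunion_hemp] at this

lemma hdom_heapOf (s : Stack) (S : SP) :
    hdom (heapOf s S) = {v | ¬ emptyCond s S ∧ v = addrVal s S} := by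
  cases S with
  | emp => simp [heapOf, hemp, hdom, emptyCond]
  | next x y =>
    ext v; simp [heapOf, hdom, hsingle, emptyCond, addrVal]
  | lseg x y =>
    by_cases hxy : s x = s y
    · simp [heapOf, hxy, hdom, hemp, emptyCond]
    · ext v; simp [heapOf, hxy, hdom, hsingle, emptyCond, addrVal]

lemma hdom_hunion (h₁ h₂ : Heap) : hdom (hunion h₁ h₂) = hdom h₁ ∪ hdom h₂ := by
  ext l; simp only [hdom, hunion, Set.mem_union, Set.mem_setOf_eq]
  cases h : h₁ l <;> simp [h]

theorem stmt3 (s : Stack) (Sg : List SP) (hwf : wellFormed s Sg) :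
    ∃ h : Heap, satList s h Sg ∧
      hdom h = {v | ∃ S ∈ Sg, ¬ emptyCond s S ∧ v = addrVal s S} := by
  induction Sg with
  | nil => exact ⟨hemp, rfl, by ext v; simp [hdom, hemp]⟩
  | cons S Sg ih =>
    obtain ⟨h₂, hsat₂, hdom₂⟩ := ih (List.Pairwise.sublist (List.sublist_cons_self S Sg) hwf)
    have hnc : ∀ S' ∈ Sg, ¬ collide s S S' := (List.pairwise_cons.mp hwf).1
    have hdisj12 : hdisj (heapOf s S) h₂ := by
      intro l
      by_cases h1 : heapOf s S l = none
      · exact Or.inl h1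
      · right
        by_contra h2
        have hl1 : l ∈ hdom (heapOf s S) := h1
        have hl2 : l ∈ hdom h₂ := h2
        rw [hdom_heapOf] at hl1
        rw [hdom₂] at hl2
        obtain ⟨hne, hla⟩ := hl1
        obtain ⟨S', hS', hne', hla'⟩ := hl2
        exact hnc S' hS' ⟨hne, hne', by rw [← hla, ← hla']⟩
    refine ⟨hunion (heapOf s S) h₂, ⟨heapOf s S, h₂, hdisj12, rfl, sat_heapOf s S, hsat₂⟩, ?_⟩
    rw [hdom_hunion, hdom_heapOf, hdom₂]
    ext v
    simp only [Set.mem_union, Set.mem_setOf_eq, List.mem_cons]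
    constructor
    · rintro (⟨hne, hv⟩ | ⟨S', hS', hne, hv⟩)
      · exact ⟨S, Or.inl rfl, hne, hv⟩
      · exact ⟨S', Or.inr hS', hne, hv⟩
    · rintro ⟨S', (rfl | hS'), hne, hv⟩
      · exact Or.inl ⟨hne, hv⟩
      · exact Or.inr ⟨S', hS', hne, hv⟩
end

section
/- A spatial conjunction Σ is satisfiable (by some stack-heap pair) if and only if the pure formula WellFormed(Σ) is satisfiable (by some stack). -/
lemma hunion_none {h₁ h₂ : Heap} {l : ℤ} :
    hunion h₁ h₂ l = none ↔ h₁ l = none ∧ h₂ l = none := by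
  unfold hunion
  cases h : h₁ l <;> simp [h]

lemma satList_wf {s : Stack} {h : Heap} {Sg : List SP} (hs : satList s h Sg) :
    wellFormed s Sg := by
  induction Sg generalizing h with
  | nil => exact List.Pairwise.nil
  | cons T Tg ih =>
    obtain ⟨h₁, h₂, hd, rfl, hsat, htl⟩ := hs
    refine List.Pairwise.cons (fun S' hmem hcol => ?_) (ih htl)
    obtain ⟨hne1, hne2, haddr⟩ := hcol
    have d1 := sat_addr hsat hne1
    have d2 := satList_addr htl hmem hne2
    rw [← haddr] at d2
    rcases hd (addrVal s T) with h | h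
    · exact d1 h
    · exact d2 h

def hOf (s : Stack) : SP → Heap
  | .emp => hemp
  | .next x y => hsingle (s x) (s y)
  | .lseg x y => if s x = s y then hemp else hsingle (s x) (s y)

lemma sat_hOf (s : Stack) (S : SP) : sat s (hOf s S) S := by
  cases S with
  | emp => rfl
  | next x y => rfl
  | lseg x y =>
    by_cases h : s x = s y
    · show Lseg (s x) (s y) (hOf s (.lseg x y))
      rw [show hOf s (.lseg x y) = hemp from if_pos h, h]
      exact Lseg.nil _
    · show Lseg (s x) (s y) (hOf s (.lseg x y))
      rw [show hOf s (.lseg x y) = hsingle (s x) (s y) from if_neg h]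
      have he : hsingle (s x) (s y) = hunion (hsingle (s x) (s y)) hemp := by
        funext l
        cases hl : hsingle (s x) (s y) l <;> simp [hunion, hl, hemp]
      rw [he]
      exact Lseg.cons h rfl (Lseg.nil _)

lemma hOf_dom {s : Stack} {S : SP} {l : ℤ} (h : hOf s S l ≠ none) :
    ¬ emptyCond s S ∧ l = addrVal s S := by
  cases S with
  | emp => exact absurd rfl h
  | next x y =>
    refine ⟨fun f => f, ?_⟩
    by_contra hl
    exact h (if_neg hl)
  | lseg x y =>
    by_cases hxy : s x = s y
    · rw [show hOf s (.lseg x y) = hemp from if_pos hxy] at h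
      exact absurd rfl h
    · rw [show hOf s (.lseg x y) = hsingle (s x) (s y) from if_neg hxy] at h
      refine ⟨hxy, ?_⟩
      by_contra hl
      exact h (if_neg hl)

def hList (s : Stack) : List SP → Heap
  | [] => hemp
  | S :: Sg => hunion (hOf s S) (hList s Sg)

lemma hList_dom {s : Stack} {Sg : List SP} {l : ℤ} (h : hList s Sg l ≠ none) :
    ∃ S ∈ Sg, ¬ emptyCond s S ∧ l = addrVal s S := by
  induction Sg with
  | nil => exact absurd rfl h
  | cons T Tg ih =>
    rw [show hList s (T :: Tg) = hunion (hOf s T) (hList s Tg) from rfl, ne_eq,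
      hunion_none, not_and_or] at h
    rcases h with h | h
    · exact ⟨T, .head _, hOf_dom h⟩
    · obtain ⟨S, hm, hp⟩ := ih h
      exact ⟨S, .tail _ hm, hp⟩

lemma wf_sat {s : Stack} {Sg : List SP} (hwf : wellFormed s Sg) :
    satList s (hList s Sg) Sg := by
  induction Sg with
  | nil => rfl
  | cons T Tg ih =>
    obtain ⟨hnc, hwf'⟩ := List.pairwise_cons.mp hwf
    refine ⟨hOf s T, hList s Tg, ?_, rfl, sat_hOf s T, ih hwf'⟩
    intro l
    by_contra hc
    push_neg at hc
    obtain ⟨h1, h2⟩ := hc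
    obtain ⟨hne1, rfl⟩ := hOf_dom h1
    obtain ⟨S, hm, hne2, heq⟩ := hList_dom h2
    exact hnc S hm ⟨hne1, hne2, heq⟩

theorem stmt4 (Sg : List SP) :
    (∃ (s : Stack) (h : Heap), satList s h Sg) ↔ (∃ s : Stack, wellFormed s Sg) := by
  constructor
  · rintro ⟨s, h, hs⟩
    exact ⟨s, satList_wf hs⟩
  · rintro ⟨s, hwf⟩
    exact ⟨s, hList s Sg, wf_sat hwf⟩
end

section
/- Unfolding next against lseg: if s satisfies x ≃ x' (collision) and s,h ⊨ lseg(x',z), and h = h₁ ∗ h₂ with s,h₁ ⊨ next(x,y), then s,h₂ ⊨ lseg(y,z). -/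
lemma lseg_inv {a b : ℤ} {h : Heap} (H : Lseg a b h) :
    (a = b ∧ h = hemp) ∨ ∃ c t, a ≠ b ∧ t a = none ∧ Lseg c b t ∧ h = hunion (hsingle a c) t := by
  cases H with
  | nil => left; exact ⟨rfl, rfl⟩
  | cons hne hfresh ht => right; exact ⟨_, _, hne, hfresh, ht, rfl⟩

theorem stmt5 (s : Stack) (h h₁ h₂ : Heap) (x x' y z : String)
    (hcol : s x = s x')
    (hl : sat s h (.lseg x' z))
    (hd : hdisj h₁ h₂) (hu : h = hunion h₁ h₂)
    (hn : sat s h₁ (.next x y)) :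
    sat s h₂ (.lseg y z) := by
  simp only [sat] at hl hn ⊢
  subst hn hu
  rcases lseg_inv hl with ⟨_, hemp'⟩ | ⟨c, t, hne, hfresh, ht, heq⟩
  · exfalso
    have : hunion (hsingle (s x) (s y)) h₂ (s x) = hemp (s x) := by rw [hemp']
    simp [hunion, hsingle, hemp] at this
  · have hx : hunion (hsingle (s x) (s y)) h₂ (s x) = hunion (hsingle (s x') c) t (s x) := by
      rw [← heq]
    have hcy : c = s y := by
      simp [hunion, hsingle, hcol] at hx
      exact hx.symm
    have h2x : h₂ (s x) = none := by
      rcases hd (s x) with h1 | h2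
      · simp [hsingle] at h1
      · exact h2
    have htx : h₂ = t := by
      funext l
      by_cases hlx : l = s x
      · subst hlx; rw [h2x, ← hcol] at *; exact hfresh.symm
      · have := congrFun heq l
        simp [hunion, hsingle, hlx, hcol ▸ hlx] at this
        exact this
    rw [htx, ← hcy]
    exact ht
end

section
/- Unfolding lseg against lseg: if s satisfies the collision condition for lseg(x,y) and lseg(x',z) (i.e., s(x)=s(x'), s(x)≠s(y), s(x')≠s(z)), s,h ⊨ lseg(x',z), and h = h₁ ∗ h₂ with s,h₁ ⊨ lseg(x,y), then s,h₂ ⊨ lseg(y,z). -/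
lemma Lseg.end_fresh : ∀ {a b : ℤ} {h : Heap}, Lseg a b h → h b = none := by
  intro a b h hl
  induction hl with
  | nil => rfl
  | cons hne hfresh ht ih =>
    show hunion (hsingle _ _) _ _ = none
    simp [hunion, hsingle, hne.symm, ih]

lemma lseg_split : ∀ {a b : ℤ} {h₁ : Heap}, Lseg a b h₁ →
    ∀ {c : ℤ} {h₂ : Heap}, hdisj h₁ h₂ → Lseg a c (hunion h₁ h₂) → Lseg b c h₂ := by
  intro a b h₁ hl
  induction hl with
  | nil a =>
    intro c h₂ hd hbig
    have : hunion hemp h₂ = h₂ := by funext l; rfl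
    rwa [this] at hbig
  | @cons a b d h hne hfresh ht ih =>
    intro c h₂ hd hbig
    have hda : (hunion (hunion (hsingle a d) h) h₂) a = some d := by
      simp [hunion, hsingle]
    generalize hH : hunion (hunion (hsingle a d) h) h₂ = H at hbig hda
    cases hbig with
    | nil => simp [hemp] at hda
    | @cons _ _ e h'' hne' hfresh' ht' =>
      have heq : hunion (hsingle a e) h'' = hunion (hunion (hsingle a d) h) h₂ := hH.symm
      -- heq : hunion (hsingle a e) h'' = hunion (hunion (hsingle a d) h) h₂
      have he : e = d := by
        have := congrFun heq a
        simp [hunion, hsingle] at this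
        exact this
      subst he
      have h2a : h₂ a = none := by
        rcases hd a with h' | h'
        · exfalso; simp [hunion, hsingle] at h'
        · exact h'
      have hha : h'' = hunion h h₂ := by
        funext l
        by_cases hla : l = a
        · subst hla; simp [hunion, hfresh, h2a, hfresh']
        · have := congrFun heq l
          simpa [hunion, hsingle, hla] using this
      have hd' : hdisj h h₂ := by
        intro l
        rcases hd l with h' | h'
        · by_cases hla : l = a
          · left; subst hla; exact hfresh
          · left; simpa [hunion, hsingle, hla] using h'
        · right; exact h'
      exact ih hd' (hha ▸ ht')

theorem stmt6 (s : Stack) (h h₁ h₂ : Heap) (x x' y z : String)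
    (hcol : s x = s x') (hne1 : s x ≠ s y) (hne2 : s x' ≠ s z)
    (hl : sat s h (.lseg x' z))
    (hd : hdisj h₁ h₂) (hu : h = hunion h₁ h₂)
    (hseg : sat s h₁ (.lseg x y)) :
    sat s h₂ (.lseg y z) := by
  subst hu
  simp only [sat] at hl hseg ⊢
  rw [← hcol] at hl
  exact lseg_split hseg hd hl
end

section
/- Acyclicity of list segments: if s,h ⊨ lseg(x,z) and s(x) ≠ s(z), then s(z) is not in the domain of h, and s(x) is in the domain of h. -/
lemma Lseg_end_none {a b : ℤ} {h : Heap} (hl : Lseg a b h) : h b = none := by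
  induction hl with
  | nil a => rfl
  | cons hne hfresh ht ih =>
    simp only [hunion, hsingle]
    rw [if_neg (fun e => hne e.symm)]
    exact ih

theorem stmt9 (s : Stack) (h : Heap) (x z : String)
    (hl : sat s h (.lseg x z)) (hne : s x ≠ s z) :
    s z ∉ hdom h ∧ s x ∈ hdom h := by
  simp only [sat] at hl
  constructor
  · intro hmem
    exact hmem (Lseg_end_none hl)
  · have key : ∀ a b h', Lseg a b h' → a ≠ b → h' a ≠ none := by
      intro a b h' hl' hne'
      cases hl' with
      | nil => exact absurd rfl hne'
      | cons hne2 hfresh ht =>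
        show hunion _ _ _ ≠ none
        simp [hunion, hsingle]
    exact key _ _ _ hl hne
end

section
/- Allocation condition soundness: given a spatial conjunction Σ = S₁ ∗ ... ∗ Sₙ, a stack s, and a heap h with s,h ⊨ Σ, if s ⊨ Alloc(Σ,x) then s(x) ∈ dom(h). -/
lemma hdom_union_left {h₁ h₂ : Heap} {l : ℤ} (hl : l ∈ hdom h₁) :
    l ∈ hdom (hunion h₁ h₂) := by
  simp only [hdom, Set.mem_setOf_eq, hunion] at *
  cases hv : h₁ l with
  | none => exact absurd hv hl
  | some v => simp [hv]

lemma hdom_union_right {h₁ h₂ : Heap} {l : ℤ} (hl : l ∈ hdom h₂) :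
    l ∈ hdom (hunion h₁ h₂) := by
  simp only [hdom, Set.mem_setOf_eq, hunion] at *
  cases hv : h₁ l with
  | none => exact hl
  | some v => simp

lemma addr_mem_dom {s : Stack} {h : Heap} {S : SP} (hsat : sat s h S)
    (hne : ¬ emptyCond s S) : addrVal s S ∈ hdom h := by
  cases S with
  | emp => exact absurd trivial hne
  | next a b =>
    subst hsat
    simp [hdom, hsingle, addrVal]
  | lseg a b =>
    simp only [emptyCond] at hne
    simp only [sat] at hsat
    simp only [addrVal]
    generalize s a = p at hsat hne ⊢
    generalize s b = q at hsat hne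
    cases hsat with
    | nil => exact absurd rfl hne
    | cons hne' hfresh ht =>
      apply hdom_union_left
      simp [hdom, hsingle]

theorem stmt14 (s : Stack) (h : Heap) (Sg : List SP) (x : String)
    (hs : satList s h Sg)
    (halloc : ∃ S ∈ Sg, ¬ emptyCond s S ∧ s x = addrVal s S) :
    s x ∈ hdom h := by
  induction Sg generalizing h with
  | nil => simp at halloc
  | cons S Sg ih =>
    obtain ⟨h₁, h₂, hd, rfl, hsat, hrest⟩ := hs
    obtain ⟨T, hT, hTne, hx⟩ := halloc
    rcases List.mem_cons.mp hT with rfl | hT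
    · rw [hx]
      exact hdom_union_left (addr_mem_dom hsat hTne)
    · exact hdom_union_right (ih h₂ hrest ⟨T, hT, hTne, hx⟩)
end

section
/- Non-colliding consequent predicate yields a counterexample: let Σ be a spatial conjunction with s ⊨ WellFormed(Σ), and let S' be a spatial predicate with s ⊨ ¬Empty(S') such that for every conjunct S of Σ, s ⊭ Collide(S,S'). Then there exists a heap h with s,h ⊨ Σ and s(Addr(S')) ∉ dom(h); consequently s,h ⊭ Σ' for any spatial conjunction Σ' containing S'. -/
def modelOf (s : Stack) : SP → Heap
  | .emp => hemp
  | .next x y => hsingle (s x) (s y)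
  | .lseg x y => if s x = s y then hemp else hsingle (s x) (s y)

lemma sat_modelOf (s : Stack) (S : SP) : sat s (modelOf s S) S := by
  cases S with
  | emp => rfl
  | next x y => rfl
  | lseg x y =>
    by_cases hxy : s x = s y
    · simp [modelOf, sat, hxy]
      exact hxy ▸ Lseg.nil (s x)
    · simp only [modelOf, sat, if_neg hxy]
      have : hsingle (s x) (s y) = hunion (hsingle (s x) (s y)) hemp :=
        (hunion_hemp _).symm
      rw [this]
      exact Lseg.cons hxy rfl (Lseg.nil (s y))

lemma modelOf_ne (s : Stack) (S : SP) (l : ℤ) (h : modelOf s S l ≠ none) :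
    ¬ emptyCond s S ∧ l = addrVal s S := by
  cases S with
  | emp => exact absurd rfl h
  | next x y =>
    simp only [modelOf, hsingle] at h
    split at h
    · exact ⟨fun c => c, by assumption⟩
    · exact absurd rfl h
  | lseg x y =>
    simp only [modelOf] at h
    split at h
    · exact absurd rfl h
    · simp only [hsingle] at h
      split at h
      · exact ⟨by assumption, by assumption⟩
      · exact absurd rfl h

def listModel (s : Stack) : List SP → Heap
  | [] => hemp
  | S :: Sg => hunion (modelOf s S) (listModel s Sg)

lemma listModel_ne (s : Stack) (Sg : List SP) (l : ℤ)
    (h : listModel s Sg l ≠ none) :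
    ∃ S ∈ Sg, ¬ emptyCond s S ∧ l = addrVal s S := by
  induction Sg with
  | nil => exact absurd rfl h
  | cons S Sg ih =>
    simp only [listModel, hunion] at h
    cases hS : modelOf s S l with
    | some v => exact ⟨S, List.mem_cons_self, modelOf_ne s S l (by simp [hS])⟩
    | none =>
      rw [hS] at h
      obtain ⟨T, hT, hprop⟩ := ih h
      exact ⟨T, List.mem_cons_of_mem _ hT, hprop⟩

lemma satList_listModel (s : Stack) (Sg : List SP) (hwf : wellFormed s Sg) :
    satList s (listModel s Sg) Sg := by
  induction Sg with
  | nil => rfl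
  | cons S Sg ih =>
    rw [wellFormed, List.pairwise_cons] at hwf
    refine ⟨modelOf s S, listModel s Sg, ?_, rfl, sat_modelOf s S, ih hwf.2⟩
    intro l
    by_contra hc
    push_neg at hc
    obtain ⟨h1, h2⟩ := hc
    obtain ⟨hneS, hlS⟩ := modelOf_ne s S l h1
    obtain ⟨T, hT, hneT, hlT⟩ := listModel_ne s Sg l h2
    exact hwf.1 T hT ⟨hneS, hneT, hlS ▸ hlT⟩

lemma lseg_addr_ne {a b : ℤ} {h : Heap} (hl : Lseg a b h) (hab : a ≠ b) :
    h a ≠ none := by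
  cases hl with
  | nil => exact absurd rfl hab
  | cons hne hfresh ht => simp [hunion, hsingle]

lemma sat_addr_ne (s : Stack) (h : Heap) (S : SP) (hsat : sat s h S)
    (hne : ¬ emptyCond s S) : h (addrVal s S) ≠ none := by
  cases S with
  | emp => exact absurd trivial hne
  | next x y =>
    simp only [sat] at hsat
    simp [hsat, addrVal, hsingle]
  | lseg x y =>
    exact lseg_addr_ne hsat hne

lemma satList_addr_ne (s : Stack) (h : Heap) (S' : SP) (Sg' : List SP)
    (hmem : S' ∈ Sg') (hsat : satList s h Sg') (hne : ¬ emptyCond s S') :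
    h (addrVal s S') ≠ none := by
  induction Sg' generalizing h with
  | nil => cases hmem
  | cons T Sg' ih =>
    obtain ⟨h₁, h₂, _, rfl, hs1, hs2⟩ := hsat
    cases hmem with
    | head =>
      have := sat_addr_ne s h₁ S' hs1 hne
      simp only [hunion]
      cases hv : h₁ (addrVal s S') with
      | none => exact absurd hv this
      | some v => simp
    | tail _ hmem' =>
      have := ih h₂ hmem' hs2
      simp only [hunion]
      cases hv : h₁ (addrVal s S') with
      | none => exact this
      | some v => simp

theorem stmt18 (s : Stack) (Sg : List SP) (S' : SP)
    (hwf : wellFormed s Sg) (hne : ¬ emptyCond s S')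
    (hnc : ∀ S ∈ Sg, ¬ collide s S S') :
    ∃ h : Heap, satList s h Sg ∧ addrVal s S' ∉ hdom h ∧
      ∀ Sg' : List SP, S' ∈ Sg' → ¬ satList s h Sg' := by
  refine ⟨listModel s Sg, satList_listModel s Sg hwf, ?_, ?_⟩
  · intro hmem
    obtain ⟨S, hS, hneS, hl⟩ := listModel_ne s Sg _ hmem
    exact hnc S hS ⟨hneS, hne, hl.symm⟩
  · intro Sg' hmem hsat
    have h1 := satList_addr_ne s (listModel s Sg) S' Sg' hmem hsat hne
    have h2 : listModel s Sg (addrVal s S') = none := by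
      by_contra hc
      obtain ⟨S, hS, hneS, hl⟩ := listModel_ne s Sg _ hc
      exact hnc S hS ⟨hneS, hne, hl.symm⟩
    exact h1 h2
end

section
/- Segment length and distinct addresses: if s,h ⊨ lseg(x,z), then there exists a finite sequence of values v₀ = s(x), v₁, ..., vₙ = s(z) such that the vᵢ for i < n are pairwise distinct, dom(h) = {v₀, ..., v_{n-1}}, and h(vᵢ) = v_{i+1} for all i < n. -/
lemma lseg_seq {a b : ℤ} {h : Heap} (hl : Lseg a b h) :
    ∃ (n : ℕ) (v : ℕ → ℤ),
      v 0 = a ∧ v n = b ∧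
      (∀ i j, i < n → j < n → v i = v j → i = j) ∧
      hdom h = {w | ∃ i < n, w = v i} ∧
      (∀ i < n, h (v i) = some (v (i + 1))) := by
  induction hl with
  | nil a =>
    refine ⟨0, fun _ => a, rfl, rfl, by omega, ?_, by omega⟩
    ext w
    simp [hdom, hemp]
  | cons hne hfresh ht ih =>
    rename_i a b c h
    obtain ⟨n, v, hv0, hvn, hinj, hdm, hstep⟩ := ih
    have hvmem : ∀ i < n, v i ∈ hdom h := by
      intro i hi
      simp only [hdom, Set.mem_setOf_eq]
      rw [hstep i hi]; simp
    have hva : ∀ i < n, v i ≠ a := by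
      intro i hi heq
      have := hvmem i hi
      rw [heq] at this
      simp [hdom, hfresh] at this
    refine ⟨n + 1, fun i => if i = 0 then a else v (i - 1), by simp, ?_, ?_, ?_, ?_⟩
    · simpa using hvn
    · intro i j hi hj heq
      simp only at heq
      rcases Nat.eq_zero_or_pos i with hi0 | hi0 <;>
        rcases Nat.eq_zero_or_pos j with hj0 | hj0
      · omega
      · simp [hi0, Nat.pos_iff_ne_zero.mp hj0] at heq
        exact absurd heq.symm (hva _ (by omega))
      · simp [hj0, Nat.pos_iff_ne_zero.mp hi0] at heq
        exact absurd heq (hva _ (by omega))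
      · simp [Nat.pos_iff_ne_zero.mp hi0, Nat.pos_iff_ne_zero.mp hj0] at heq
        have := hinj _ _ (by omega) (by omega) heq
        omega
    · ext w
      simp only [hdom, Set.mem_setOf_eq, hunion, hsingle]
      constructor
      · intro hw
        by_cases hwa : w = a
        · exact ⟨0, by omega, by simp [hwa]⟩
        · simp [hwa] at hw
          have : w ∈ hdom h := hw
          rw [hdm] at this
          obtain ⟨i, hi, hwi⟩ := this
          exact ⟨i + 1, by omega, by simpa using hwi⟩
      · rintro ⟨i, hi, rfl⟩
        rcases Nat.eq_zero_or_pos i with hi0 | hi0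
        · simp [hi0]
        · have hine : i ≠ 0 := by omega
          simp only [if_neg hine, hunion, hsingle, if_neg (hva (i - 1) (by omega))]
          have := hvmem (i - 1) (by omega)
          simpa [hdom] using this
    · intro i hi
      rcases Nat.eq_zero_or_pos i with hi0 | hi0
      · simp [hi0, hunion, hsingle, hv0]
      · have hine : i ≠ 0 := by omega
        have h1 : i + 1 ≠ 0 := by omega
        simp only [if_neg hine, if_neg h1]
        rw [show i + 1 - 1 = i - 1 + 1 by omega]
        simp only [hunion, hsingle, if_neg (hva (i - 1) (by omega))]
        exact hstep (i - 1) (by omega)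

theorem stmt19 (s : Stack) (h : Heap) (x z : String)
    (hl : sat s h (.lseg x z)) :
    ∃ (n : ℕ) (v : ℕ → ℤ),
      v 0 = s x ∧ v n = s z ∧
      (∀ i j, i < n → j < n → v i = v j → i = j) ∧
      hdom h = {w | ∃ i < n, w = v i} ∧
      (∀ i < n, h (v i) = some (v (i + 1))) := lseg_seq hl
end
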